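/- Let g : ℝ → ℝ be a measurable function that is periodic with period p > 0, satisfies g(x) = −g(x + p/2) for all x ∈ ℝ, and satisfies |g(x)| ≤ 1 for all x. Let h : ℝ → ℝ be a nonnegative Lebesgue-integrable function, let c_1 ≠ 0 and c_2 be real constants, and let [a_1, b_1] be an interval on which h is monotonically increasing. Then |∫_{a_1}^{b_1} g(c_1 x + c_2) h(x) dx| ≤ ∫_{b_1 − p/(2|c_1|)}^{b_1} h(x) dx. -/

import Mathlib

open MeasureTheory intervalIntegral

private lemma abs_int_le_aux {u v : ℝ} (huv : u ≤ v) {f g : ℝ → ℝ}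
    (hf : IntervalIntegrable f volume u v) (hg : IntervalIntegrable g volume u v)
    (h : ∀ x ∈ Set.Icc u v, |f x| ≤ g x) :
    |∫ x in u..v, f x| ≤ ∫ x in u..v, g x := by
  calc |∫ x in u..v, f x| ≤ ∫ x in u..v, |f x| :=
        intervalIntegral.abs_integral_le_integral_abs huv
    _ ≤ ∫ x in u..v, g x := intervalIntegral.integral_mono_on huv hf.abs hg h

private lemma direct_aux (φ : ℝ → ℝ) (T : ℝ) (hT : 0 < T) (hφm : Measurable φ)
    (hφa : ∀ x, φ (x + T) = -φ x) (hφb : ∀ x, |φ x| ≤ 1)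
    (w : ℝ → ℝ) (a b : ℝ) (hab : a ≤ b) (hlen : b - a ≤ 2 * T)
    (hw : Integrable w) (hw0 : ∀ x, 0 ≤ w x)
    (hwm : ∀ x ∈ Set.Icc a (b - T), w x ≤ w (x + T)) :
    |∫ x in a..b, φ x * w x| ≤ ∫ x in (b - T)..b, w x := by
  have hφbdd : ∃ C, ∀ x, ‖φ x‖ ≤ C := ⟨1, fun x => by simpa using hφb x⟩
  have hint : Integrable (fun x => φ x * w x) := hw.bdd_mul hφm.aestronglyMeasurable (ae_of_all _ hφbdd.choose_spec)
  have hws : Integrable (fun x => w (x - T)) := hw.comp_sub_right T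
  have hints : Integrable (fun x => φ x * w (x - T)) :=
    hws.bdd_mul hφm.aestronglyMeasurable (ae_of_all _ hφbdd.choose_spec)
  have hpt : ∀ x, |φ x * w x| ≤ w x := by
    intro x
    rw [abs_mul]
    calc |φ x| * |w x| ≤ 1 * |w x| := by
          exact mul_le_mul_of_nonneg_right (hφb x) (abs_nonneg _)
      _ = w x := by rw [one_mul, abs_of_nonneg (hw0 x)]
  by_cases hb : b - a ≤ T
  · -- short case
    have h1 : |∫ x in a..b, φ x * w x| ≤ ∫ x in a..b, w x :=
      abs_int_le_aux hab hint.intervalIntegrable hw.intervalIntegrable (fun x _ => hpt x)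
    have h2 : (∫ x in (b-T)..a, w x) + ∫ x in a..b, w x = ∫ x in (b-T)..b, w x :=
      intervalIntegral.integral_add_adjacent_intervals hw.intervalIntegrable hw.intervalIntegrable
    have h3 : 0 ≤ ∫ x in (b-T)..a, w x :=
      intervalIntegral.integral_nonneg (by linarith) (fun x _ => hw0 x)
    linarith
  · push_neg at hb
    have h1 : a ≤ b - T := by linarith
    have h2 : b - T ≤ a + T := by linarith
    have h3 : a + T ≤ b := by linarith
    -- shift identity
    have hshift : ∫ x in (a+T)..b, φ x * w (x - T) = -∫ x in a..(b-T), φ x * w x := by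
      have e1 : ∫ x in (a+T)..b, φ x * w (x - T)
          = ∫ x in (a+T)..b, -((fun y => φ y * w y) (x - T)) := by
        apply intervalIntegral.integral_congr
        intro x _
        have h := hφa (x - T)
        rw [sub_add_cancel] at h
        simp only [h]
        ring
      rw [e1, intervalIntegral.integral_neg, intervalIntegral.integral_comp_sub_right
        (fun y => φ y * w y) T]
      norm_num
    have hsplit1 : (∫ x in a..(b-T), φ x * w x) + ∫ x in (b-T)..(a+T), φ x * w x
        = ∫ x in a..(a+T), φ x * w x :=
      intervalIntegral.integral_add_adjacent_intervals hint.intervalIntegrable hint.intervalIntegrable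
    have hsplit2 : (∫ x in a..(a+T), φ x * w x) + ∫ x in (a+T)..b, φ x * w x
        = ∫ x in a..b, φ x * w x :=
      intervalIntegral.integral_add_adjacent_intervals hint.intervalIntegrable hint.intervalIntegrable
    have hsub : ∫ x in (a+T)..b, (φ x * w x - φ x * w (x - T))
        = (∫ x in (a+T)..b, φ x * w x) - ∫ x in (a+T)..b, φ x * w (x - T) :=
      intervalIntegral.integral_sub hint.intervalIntegrable hints.intervalIntegrable
    have hrep : ∫ x in a..b, φ x * w x
        = (∫ x in (b-T)..(a+T), φ x * w x) + ∫ x in (a+T)..b, (φ x * w x - φ x * w (x - T)) := by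
      rw [hsub]
      linarith [hshift, hsplit1, hsplit2]
    have hb1 : |∫ x in (b-T)..(a+T), φ x * w x| ≤ ∫ x in (b-T)..(a+T), w x :=
      abs_int_le_aux h2 hint.intervalIntegrable hw.intervalIntegrable (fun x _ => hpt x)
    have hb2 : |∫ x in (a+T)..b, (φ x * w x - φ x * w (x - T))|
        ≤ ∫ x in (a+T)..b, (w x - w (x - T)) := by
      apply abs_int_le_aux h3 (hint.intervalIntegrable.sub hints.intervalIntegrable)
        (hw.intervalIntegrable.sub hws.intervalIntegrable)
      intro x hx
      have hx1 : x - T ∈ Set.Icc a (b - T) := ⟨by linarith [hx.1], by linarith [hx.2]⟩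
      have hle : w (x - T) ≤ w x := by
        have := hwm _ hx1
        rwa [sub_add_cancel] at this
      have : φ x * w x - φ x * w (x - T) = φ x * (w x - w (x - T)) := by ring
      rw [this, abs_mul]
      calc |φ x| * |w x - w (x - T)| ≤ 1 * |w x - w (x - T)| :=
            mul_le_mul_of_nonneg_right (hφb x) (abs_nonneg _)
        _ = w x - w (x - T) := by rw [one_mul, abs_of_nonneg (by linarith)]
    have hb3 : ∫ x in (a+T)..b, (w x - w (x - T)) ≤ ∫ x in (a+T)..b, w x := by
      apply intervalIntegral.integral_mono_on h3
        (hw.intervalIntegrable.sub hws.intervalIntegrable) hw.intervalIntegrable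
      intro x _
      have := hw0 (x - T)
      linarith
    have hsplit3 : (∫ x in (b-T)..(a+T), w x) + ∫ x in (a+T)..b, w x = ∫ x in (b-T)..b, w x :=
      intervalIntegral.integral_add_adjacent_intervals hw.intervalIntegrable hw.intervalIntegrable
    calc |∫ x in a..b, φ x * w x|
        ≤ |∫ x in (b-T)..(a+T), φ x * w x|
          + |∫ x in (a+T)..b, (φ x * w x - φ x * w (x - T))| := by
          rw [hrep]; exact abs_add_le _ _
      _ ≤ (∫ x in (b-T)..(a+T), w x) + ∫ x in (a+T)..b, w x := by
          linarith [hb1, hb2, hb3]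
      _ = ∫ x in (b-T)..b, w x := hsplit3

private lemma main_ind_aux (φ : ℝ → ℝ) (T : ℝ) (hT : 0 < T) (hφm : Measurable φ)
    (hφa : ∀ x, φ (x + T) = -φ x) (hφb : ∀ x, |φ x| ≤ 1) :
    ∀ (n : ℕ) (w : ℝ → ℝ) (a b : ℝ), a ≤ b → b - a ≤ n * T →
      Integrable w → (∀ x, 0 ≤ w x) → (∀ x ∈ Set.Icc a (b - T), w x ≤ w (x + T)) →
      |∫ x in a..b, φ x * w x| ≤ ∫ x in (b - T)..b, w x := by
  intro n
  induction n with
  | zero =>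
    intro w a b hab hlen hw hw0 hwm
    exact direct_aux φ T hT hφm hφa hφb w a b hab (by push_cast at hlen; nlinarith) hw hw0 hwm
  | succ n ih =>
    intro w a b hab hlen hw hw0 hwm
    by_cases h2 : b - a ≤ 2 * T
    · exact direct_aux φ T hT hφm hφa hφb w a b hab h2 hw hw0 hwm
    · push_neg at h2
      have hφbdd : ∃ C, ∀ x, ‖φ x‖ ≤ C := ⟨1, fun x => by simpa using hφb x⟩
      have hint : Integrable (fun x => φ x * w x) := hw.bdd_mul hφm.aestronglyMeasurable (ae_of_all _ hφbdd.choose_spec)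
      have hws : Integrable (fun x => w (x - T)) := hw.comp_sub_right T
      set ind : ℝ → ℝ := Set.indicator (Set.Ico (a+T) (a+2*T)) (fun y => w (y - T)) with hind
      have hindint : Integrable ind := hws.indicator measurableSet_Ico
      set w' : ℝ → ℝ := fun x => w x - ind x with hw'def
      have hw' : Integrable w' := hw.sub hindint
      have hind0 : ∀ x, 0 ≤ ind x := by
        intro x
        by_cases hx : x ∈ Set.Ico (a+T) (a+2*T)
        · rw [hind, Set.indicator_of_mem hx]; exact hw0 _
        · rw [hind, Set.indicator_of_notMem hx]
      have hindle : ∀ x, ind x ≤ w x := by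
        intro x
        by_cases hx : x ∈ Set.Ico (a+T) (a+2*T)
        · rw [hind, Set.indicator_of_mem hx]
          have hx1 : x - T ∈ Set.Icc a (b - T) :=
            ⟨by linarith [hx.1], by linarith [hx.2]⟩
          have := hwm _ hx1
          rwa [sub_add_cancel] at this
        · rw [hind, Set.indicator_of_notMem hx]; exact hw0 x
      have hw'0 : ∀ x, 0 ≤ w' x := fun x => by
        simp only [hw'def]; linarith [hindle x]
      have hw'm : ∀ x ∈ Set.Icc (a+T) (b - T), w' x ≤ w' (x + T) := by
        intro x hx
        have hxT : x + T ∉ Set.Ico (a+T) (a+2*T) := by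
          intro hmem
          have := hmem.2
          linarith [hx.1]
        simp only [hw'def, hind, Set.indicator_of_notMem hxT]
        have hxb : x ∈ Set.Icc a (b - T) := ⟨by linarith [hx.1], hx.2⟩
        have hle1 : w x ≤ w (x + T) := hwm _ hxb
        have := hind0 x
        simp only [hind] at this
        linarith
      -- key identity
      have hintind : Integrable (fun x => φ x * ind x) :=
        hindint.bdd_mul hφm.aestronglyMeasurable (ae_of_all _ hφbdd.choose_spec)
      have hints : Integrable (fun x => φ x * w (x - T)) :=
        hws.bdd_mul hφm.aestronglyMeasurable (ae_of_all _ hφbdd.choose_spec)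
      have hintw' : Integrable (fun x => φ x * w' x) :=
        hw'.bdd_mul hφm.aestronglyMeasurable (ae_of_all _ hφbdd.choose_spec)
      have e0 : ∫ x in (a+T)..b, φ x * w' x
          = (∫ x in (a+T)..b, φ x * w x) - ∫ x in (a+T)..b, φ x * ind x := by
        rw [← intervalIntegral.integral_sub hint.intervalIntegrable hintind.intervalIntegrable]
        apply intervalIntegral.integral_congr
        intro x _
        simp only [hw'def]
        ring
      have e1 : ∫ x in (a+2*T)..b, φ x * ind x = 0 := by
        rw [show (0:ℝ) = ∫ x in (a+2*T)..b, (0:ℝ) by simp]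
        apply intervalIntegral.integral_congr
        intro x hx
        rw [Set.uIcc_of_le (by linarith)] at hx
        have : x ∉ Set.Ico (a+T) (a+2*T) := by
          intro hmem
          linarith [hmem.2, hx.1]
        simp only [hind, Set.indicator_of_notMem this, mul_zero]
      have e2 : ∫ x in (a+T)..(a+2*T), φ x * ind x
          = ∫ x in (a+T)..(a+2*T), φ x * w (x - T) := by
        apply intervalIntegral.integral_congr_ae
        have hsing : ∀ᵐ (x : ℝ), x ≠ a + 2*T := by
          have : (volume : Measure ℝ) {a + 2*T} = 0 := measure_singleton _
          exact measure_eq_zero_iff_ae_notMem.mp this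
        filter_upwards [hsing] with x hxne hx
        rw [Set.uIoc_of_le (by linarith)] at hx
        have hmem : x ∈ Set.Ico (a+T) (a+2*T) := ⟨le_of_lt hx.1, lt_of_le_of_ne hx.2 hxne⟩
        rw [hind, Set.indicator_of_mem hmem]
      have e3 : ∫ x in (a+T)..(a+2*T), φ x * w (x - T) = -∫ x in a..(a+T), φ x * w x := by
        have e1' : ∫ x in (a+T)..(a+2*T), φ x * w (x - T)
            = ∫ x in (a+T)..(a+2*T), -((fun y => φ y * w y) (x - T)) := by
          apply intervalIntegral.integral_congr
          intro x _
          have h := hφa (x - T)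
          rw [sub_add_cancel] at h
          simp only [h]
          ring
        rw [e1', intervalIntegral.integral_neg, intervalIntegral.integral_comp_sub_right
          (fun y => φ y * w y) T]
        norm_num
        rw [show a + 2*T - T = a + T by ring]
      have esplit : (∫ x in (a+T)..(a+2*T), φ x * ind x) + ∫ x in (a+2*T)..b, φ x * ind x
          = ∫ x in (a+T)..b, φ x * ind x :=
        intervalIntegral.integral_add_adjacent_intervals hintind.intervalIntegrable
          hintind.intervalIntegrable
      have esplit2 : (∫ x in a..(a+T), φ x * w x) + ∫ x in (a+T)..b, φ x * w x
          = ∫ x in a..b, φ x * w x :=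
        intervalIntegral.integral_add_adjacent_intervals hint.intervalIntegrable
          hint.intervalIntegrable
      have key : ∫ x in (a+T)..b, φ x * w' x = ∫ x in a..b, φ x * w x := by
        rw [e0]
        have : ∫ x in (a+T)..b, φ x * ind x = -∫ x in a..(a+T), φ x * w x := by
          rw [← esplit, e1, e2, e3]; ring
        rw [this]
        linarith [esplit2]
      have hrec := ih w' (a+T) b (by linarith) (by push_cast at hlen ⊢; linarith) hw' hw'0 hw'm
      rw [key] at hrec
      refine hrec.trans ?_
      apply intervalIntegral.integral_mono_on (by linarith) hw'.intervalIntegrable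
        hw.intervalIntegrable
      intro x _
      simp only [hw'def]
      linarith [hind0 x]

/-- If `g` is periodic with period `p > 0`, antiperiodic with antiperiod `p/2`,
bounded by `1`, and `h` is a nonnegative integrable function that is monotonically
increasing on `[a₁, b₁]`, then
`|∫_{a₁}^{b₁} g (c₁ x + c₂) h x dx| ≤ ∫_{b₁ - p/(2|c₁|)}^{b₁} h x dx`. -/
theorem abs_integral_mul_le_of_monotoneOn
    (g h : ℝ → ℝ) (p : ℝ) (hp : 0 < p)
    (hgmeas : Measurable g)
    (hgper : Function.Periodic g p)
    (hganti : ∀ x, g x = -g (x + p / 2))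
    (hgbdd : ∀ x, |g x| ≤ 1)
    (hh : ∀ x, 0 ≤ h x) (hhint : Integrable h)
    (c₁ c₂ : ℝ) (hc₁ : c₁ ≠ 0)
    (a₁ b₁ : ℝ) (hab : a₁ ≤ b₁)
    (hmono : MonotoneOn h (Set.Icc a₁ b₁)) :
    |∫ x in a₁..b₁, g (c₁ * x + c₂) * h x| ≤ ∫ x in (b₁ - p / (2 * |c₁|))..b₁, h x := by
  set T : ℝ := p / (2 * |c₁|) with hTdef
  have hc₁abs : 0 < |c₁| := abs_pos.mpr hc₁
  have hT : 0 < T := div_pos hp (by positivity)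
  set φ : ℝ → ℝ := fun x => g (c₁ * x + c₂) with hφdef
  have hφm : Measurable φ := hgmeas.comp ((measurable_id.const_mul c₁).add_const c₂)
  have hφb : ∀ x, |φ x| ≤ 1 := fun x => hgbdd _
  have hφa : ∀ x, φ (x + T) = -φ x := by
    intro x
    have hganti' : ∀ y, g (y + p / 2) = -g y := by
      intro y
      have := hganti y
      linarith
    rcases hc₁.lt_or_gt with hneg | hpos
    · have habs : |c₁| = -c₁ := abs_of_neg hneg
      have hcT : c₁ * T = -(p / 2) := by
        rw [hTdef, habs]
        field_simp
      show g (c₁ * (x + T) + c₂) = -g (c₁ * x + c₂)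
      have harg : c₁ * (x + T) + c₂ = (c₁ * x + c₂) - p / 2 := by
        rw [mul_add, hcT]; ring
      rw [harg]
      have := hganti ((c₁ * x + c₂) - p / 2)
      rw [sub_add_cancel] at this
      exact this
    · have habs : |c₁| = c₁ := abs_of_pos hpos
      have hcT : c₁ * T = p / 2 := by
        rw [hTdef, habs]
        field_simp
      show g (c₁ * (x + T) + c₂) = -g (c₁ * x + c₂)
      have harg : c₁ * (x + T) + c₂ = (c₁ * x + c₂) + p / 2 := by
        rw [mul_add, hcT]; ring
      rw [harg]
      exact hganti' _
  obtain ⟨n, hn⟩ := exists_nat_ge ((b₁ - a₁) / T)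
  have hlen : b₁ - a₁ ≤ n * T := by
    rw [div_le_iff₀ hT] at hn
    exact hn
  have hwm : ∀ x ∈ Set.Icc a₁ (b₁ - T), h x ≤ h (x + T) := by
    intro x hx
    exact hmono ⟨hx.1, by linarith [hx.2]⟩ ⟨by linarith [hx.1], by linarith [hx.2]⟩ (by linarith)
  exact main_ind_aux φ T hT hφm hφa hφb n h a₁ b₁ hab hlen hhint hh hwm
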